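/- Let h1, h2 : D → D be injective holomorphic maps from the open unit disc into itself such that the closures of h1(D) and h2(D) are disjoint compact subsets of D. Then for every infinite sequence I = (i_n) ∈ {1,2}^ℕ, the nested intersection ⋂_{n≥1} h_{i1} ∘ ... ∘ h_{in}(D) consists of exactly one point. -/

import Mathlib

open Metric

/-- Composition `h_{i₁} ∘ ... ∘ h_{iₙ}` along a finite word in `{1,2}`. -/
def compWord (h : Fin 2 → ℂ → ℂ) : List (Fin 2) → ℂ → ℂ
  | [] => id
  | i :: w => h i ∘ compWord h w

/-- The composition `h_{I 0} ∘ ... ∘ h_{I (n-1)}` along the length-`n` prefix of an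
infinite word `I`. -/
def prefixComp (h : Fin 2 → ℂ → ℂ) (I : ℕ → Fin 2) (n : ℕ) : ℂ → ℂ :=
  compWord h (List.ofFn fun k : Fin n => I k)

noncomputable def moeb (a z : ℂ) : ℂ := (a - z) / (1 - (starRingEnd ℂ) a * z)

lemma moeb_denom_ne {a z : ℂ} (ha : ‖a‖ < 1) (hz : ‖z‖ < 1) :
    1 - (starRingEnd ℂ) a * z ≠ 0 := by
  intro h
  have h1 : ‖(starRingEnd ℂ) a * z‖ < 1 := by
    rw [norm_mul, RCLike.norm_conj]
    nlinarith [norm_nonneg a, norm_nonneg z]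
  have : (starRingEnd ℂ) a * z = 1 := by linear_combination -h
  rw [this] at h1; simp at h1

lemma moeb_key (x y : ℂ) : Complex.normSq (1 - (starRingEnd ℂ) x * y) - Complex.normSq (x - y)
    = (1 - Complex.normSq x) * (1 - Complex.normSq y) := by
  simp [Complex.normSq_apply, Complex.mul_re, Complex.mul_im, Complex.conj_re, Complex.conj_im,
    Complex.sub_re, Complex.sub_im, Complex.one_re, Complex.one_im]; ring

lemma normSq_eq_nsq (z : ℂ) : Complex.normSq z = ‖z‖^2 := by
  simp [Complex.normSq_eq_norm_sq]

lemma moeb_mapsTo {a z : ℂ} (ha : ‖a‖ < 1) (hz : ‖z‖ < 1) : ‖moeb a z‖ < 1 := by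
  have hd := moeb_denom_ne ha hz
  have hdn : 0 < ‖1 - (starRingEnd ℂ) a * z‖ := norm_pos_iff.mpr hd
  rw [moeb, norm_div, div_lt_one hdn]
  have hk := moeb_key a z
  rw [normSq_eq_nsq, normSq_eq_nsq, normSq_eq_nsq, normSq_eq_nsq] at hk
  have pa : 0 < 1 - ‖a‖^2 := by nlinarith [norm_nonneg a]
  have pz : 0 < 1 - ‖z‖^2 := by nlinarith [norm_nonneg z]
  have h2 := mul_pos pa pz
  exact lt_of_pow_lt_pow_left₀ 2 (norm_nonneg _) (by nlinarith)

lemma moeb_hasDerivAt {a z : ℂ} (hne : 1 - (starRingEnd ℂ) a * z ≠ 0) :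
    HasDerivAt (moeb a) ((a * (starRingEnd ℂ) a - 1) / (1 - (starRingEnd ℂ) a * z)^2) z := by
  have h1 : HasDerivAt (fun w : ℂ => a - w) (-1) z := by
    simpa using (hasDerivAt_id z).const_sub a
  have h2 : HasDerivAt (fun w : ℂ => 1 - (starRingEnd ℂ) a * w) (-((starRingEnd ℂ) a)) z := by
    simpa using ((hasDerivAt_id z).const_mul ((starRingEnd ℂ) a)).const_sub 1
  have := h1.div h2 hne
  exact this.congr_deriv (by ring)

lemma moeb_zero (a : ℂ) : moeb a 0 = a := by simp [moeb]

lemma moeb_self (a : ℂ) : moeb a a = 0 := by simp [moeb]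

lemma schwarz_pick {f : ℂ → ℂ} (hd : DifferentiableOn ℂ f (ball 0 1))
    (hm : Set.MapsTo f (ball 0 1) (ball 0 1)) {a : ℂ} (ha : a ∈ ball (0:ℂ) 1) :
    ‖deriv f a‖ * (1 - ‖a‖^2) ≤ 1 - ‖f a‖^2 := by
  rw [mem_ball_zero_iff] at ha
  set b := f a with hb_def
  have hb : ‖b‖ < 1 := by
    have := hm (mem_ball_zero_iff.mpr ha); rwa [mem_ball_zero_iff] at this
  set g : ℂ → ℂ := fun z => moeb b (f (moeb a z)) with hg_def
  have hmem : ∀ z : ℂ, ‖z‖ < 1 → moeb a z ∈ ball (0:ℂ) 1 :=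
    fun z hz => mem_ball_zero_iff.mpr (moeb_mapsTo ha hz)
  have hg_diff : DifferentiableOn ℂ g (ball 0 1) := by
    intro z hz
    rw [mem_ball_zero_iff] at hz
    have d1 : DifferentiableAt ℂ (moeb a) z :=
      (moeb_hasDerivAt (moeb_denom_ne ha hz)).differentiableAt
    have d2 : DifferentiableAt ℂ f (moeb a z) :=
      hd.differentiableAt (isOpen_ball.mem_nhds (hmem z hz))
    have hfz : ‖f (moeb a z)‖ < 1 := by
      have := hm (hmem z hz); rwa [mem_ball_zero_iff] at this
    have d3 : DifferentiableAt ℂ (moeb b) (f (moeb a z)) :=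
      (moeb_hasDerivAt (moeb_denom_ne hb hfz)).differentiableAt
    have d23 : DifferentiableAt ℂ (f ∘ moeb a) z := d2.comp z d1
    exact ((d3.comp z d23).differentiableWithinAt)
  have hg_maps : Set.MapsTo g (ball 0 1) (ball (0:ℂ) 1) := by
    intro z hz
    rw [mem_ball_zero_iff] at hz ⊢
    have hfz : ‖f (moeb a z)‖ < 1 := by
      have := hm (hmem z hz); rwa [mem_ball_zero_iff] at this
    exact moeb_mapsTo hb hfz
  have hg0 : g 0 = 0 := by rw [hg_def]; simp only [moeb_zero, ← hb_def, moeb_self]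
  have dfa : DifferentiableAt ℂ f a :=
    hd.differentiableAt (isOpen_ball.mem_nhds (mem_ball_zero_iff.mpr ha))
  have d1 : HasDerivAt (moeb a) (a * (starRingEnd ℂ) a - 1) 0 := by
    have := moeb_hasDerivAt (a := a) (z := 0)
      (by simpa using moeb_denom_ne ha (by simp : ‖(0:ℂ)‖ < 1))
    simpa using this
  have dfa' : HasDerivAt f (deriv f a) (moeb a 0) := by rw [moeb_zero]; exact dfa.hasDerivAt
  have dcomp1 : HasDerivAt (fun z => f (moeb a z)) (deriv f a * (a * (starRingEnd ℂ) a - 1)) 0 :=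
    HasDerivAt.comp 0 dfa' d1
  have hfm0 : f (moeb a 0) = b := by rw [moeb_zero]
  have d3 : HasDerivAt (moeb b) ((b * (starRingEnd ℂ) b - 1) / (1 - (starRingEnd ℂ) b * b)^2)
      (f (moeb a 0)) := by
    rw [hfm0]; exact moeb_hasDerivAt (moeb_denom_ne hb hb)
  have dg : HasDerivAt g ((b * (starRingEnd ℂ) b - 1) / (1 - (starRingEnd ℂ) b * b)^2 *
      (deriv f a * (a * (starRingEnd ℂ) a - 1))) 0 := HasDerivAt.comp (h₂ := moeb b) 0 d3 dcomp1
  have hsch : ‖deriv g 0‖ ≤ 1 / 1 := by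
    refine Complex.norm_deriv_le_div_of_mapsTo_ball hg_diff ?_ one_pos
    rw [hg0]; exact hg_maps.mono_right ball_subset_closedBall
  rw [dg.deriv] at hsch
  have hbb : b * (starRingEnd ℂ) b = (Complex.normSq b : ℂ) := Complex.mul_conj b
  have hbb' : (starRingEnd ℂ) b * b = (Complex.normSq b : ℂ) := by rw [mul_comm]; exact hbb
  have haa : a * (starRingEnd ℂ) a = (Complex.normSq a : ℂ) := Complex.mul_conj a
  rw [hbb, hbb', haa] at hsch
  have hsb : Complex.normSq b = ‖b‖^2 := normSq_eq_nsq b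
  have hsa : Complex.normSq a = ‖a‖^2 := normSq_eq_nsq a
  have hpb : (0:ℝ) < 1 - ‖b‖^2 := by nlinarith [norm_nonneg b]
  have hnorm : ‖((Complex.normSq b : ℂ) - 1) / (1 - (Complex.normSq b : ℂ))^2 *
      (deriv f a * ((Complex.normSq a : ℂ) - 1))‖
      = (1 - ‖b‖^2)⁻¹ * (‖deriv f a‖ * (1 - ‖a‖^2)) := by
    rw [norm_mul, norm_mul, norm_div, norm_pow]
    have e1 : ((Complex.normSq b : ℂ) - 1) = ((Complex.normSq b - 1 : ℝ) : ℂ) := by push_cast; ring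
    have e2 : ((1:ℂ) - (Complex.normSq b : ℂ)) = ((1 - Complex.normSq b : ℝ) : ℂ) := by
      push_cast; ring
    have e3 : ((Complex.normSq a : ℂ) - 1) = ((Complex.normSq a - 1 : ℝ) : ℂ) := by push_cast; ring
    rw [e1, e2, e3, Complex.norm_real, Complex.norm_real, Complex.norm_real]
    rw [hsa, hsb]
    rw [Real.norm_eq_abs, Real.norm_eq_abs, Real.norm_eq_abs]
    rw [abs_of_nonpos (by nlinarith : ‖b‖^2 - 1 ≤ 0), abs_of_pos hpb,
      abs_of_nonpos (by nlinarith [norm_nonneg a] : ‖a‖^2 - 1 ≤ 0)]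
    rw [sq (1 - ‖b‖^2), div_mul_eq_div_div,
      show -(‖b‖^2 - 1) = 1 - ‖b‖^2 by ring, div_self hpb.ne', one_div]
    ring
  rw [hnorm] at hsch
  calc ‖deriv f a‖ * (1 - ‖a‖^2)
      = (1 - ‖b‖^2) * ((1 - ‖b‖^2)⁻¹ * (‖deriv f a‖ * (1 - ‖a‖^2))) := by
        rw [← mul_assoc, mul_inv_cancel₀ hpb.ne', one_mul]
    _ ≤ (1 - ‖b‖^2) * 1 := mul_le_mul_of_nonneg_left (by simpa using hsch) hpb.le
    _ = 1 - ‖b‖^2 := mul_one _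

lemma schwarz_pick_r {f : ℂ → ℂ} {r : ℝ} (hr0 : 0 < r) (hr1 : r < 1)
    (hd : DifferentiableOn ℂ f (ball 0 1))
    (hm : ∀ z ∈ ball (0:ℂ) 1, f z ∈ ball (0:ℂ) r) {a : ℂ} (ha : a ∈ ball (0:ℂ) 1) :
    ‖deriv f a‖ * (1 - ‖a‖^2) ≤ r * (1 - ‖f a‖^2) := by
  set g : ℂ → ℂ := fun z => ((r : ℂ))⁻¹ * f z with hg_def
  have hrC : ((r : ℂ)) ≠ 0 := by exact_mod_cast hr0.ne'
  have hg_diff : DifferentiableOn ℂ g (ball 0 1) := fun z hz => ((hd z hz).const_mul _)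
  have hg_maps : Set.MapsTo g (ball 0 1) (ball 0 1) := by
    intro z hz
    rw [mem_ball_zero_iff, hg_def]
    have hfz : ‖f z‖ < r := mem_ball_zero_iff.mp (hm z hz)
    rw [norm_mul, norm_inv, Complex.norm_real, Real.norm_eq_abs, abs_of_pos hr0]
    rw [inv_mul_lt_iff₀ hr0, mul_one]
    exact hfz
  have hda : DifferentiableAt ℂ f a := hd.differentiableAt (isOpen_ball.mem_nhds ha)
  have hderiv : deriv g a = (r : ℂ)⁻¹ * deriv f a := by
    rw [hg_def]; exact deriv_const_mul _ hda
  have := schwarz_pick hg_diff hg_maps ha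
  rw [hderiv] at this
  have hga : g a = (r:ℂ)⁻¹ * f a := rfl
  rw [hga, norm_mul, norm_mul, norm_inv, Complex.norm_real, Real.norm_eq_abs,
    abs_of_pos hr0] at this
  -- this : r⁻¹ * ‖deriv f a‖ * (1 - ‖a‖²) ≤ 1 - (r⁻¹ * ‖f a‖)²
  have hfa : ‖f a‖ < r := mem_ball_zero_iff.mp (hm a ha)
  have h1 : r⁻¹ * ‖deriv f a‖ * (1 - ‖a‖^2) ≤ 1 - (r⁻¹ * ‖f a‖)^2 := this
  have hA : 0 ≤ 1 - ‖a‖^2 := by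
    rw [mem_ball_zero_iff] at ha; nlinarith [norm_nonneg a]
  have hr2 : r⁻¹ = 1 / r := one_div r |>.symm
  have key : ‖deriv f a‖ * (1 - ‖a‖^2) ≤ r - ‖f a‖^2 / r := by
    have := mul_le_mul_of_nonneg_left h1 hr0.le
    calc ‖deriv f a‖ * (1 - ‖a‖^2) = r * (r⁻¹ * ‖deriv f a‖ * (1 - ‖a‖^2)) := by
          field_simp
      _ ≤ r * (1 - (r⁻¹ * ‖f a‖)^2) := this
      _ = r - ‖f a‖^2 / r := by field_simp
  have : r - ‖f a‖^2 / r ≤ r * (1 - ‖f a‖^2) := by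
    rw [mul_one_sub]
    have : r * ‖f a‖^2 ≤ ‖f a‖^2 / r := by
      rw [le_div_iff₀ hr0]
      nlinarith [mul_le_mul_of_nonneg_right (show r^2 ≤ 1 by nlinarith) (sq_nonneg (‖f a‖))]
    linarith
  linarith

section Words

variable {h : Fin 2 → ℂ → ℂ} {r : ℝ}

lemma compWord_mapsTo (hr1 : r < 1) (hmr : ∀ i, ∀ z ∈ ball (0:ℂ) 1, h i z ∈ ball (0:ℂ) r) :
    ∀ w : List (Fin 2), ∀ z ∈ ball (0:ℂ) 1, compWord h w z ∈ ball (0:ℂ) 1 := by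
  intro w
  induction w with
  | nil => intro z hz; exact hz
  | cons i w ih =>
    intro z hz
    exact ball_subset_ball hr1.le (hmr i _ (ih z hz))

lemma compWord_diffOn (hr1 : r < 1) (hhol : ∀ i, DifferentiableOn ℂ (h i) (ball (0:ℂ) 1))
    (hmr : ∀ i, ∀ z ∈ ball (0:ℂ) 1, h i z ∈ ball (0:ℂ) r) :
    ∀ w : List (Fin 2), DifferentiableOn ℂ (compWord h w) (ball (0:ℂ) 1) := by
  intro w
  induction w with
  | nil => exact differentiableOn_id
  | cons i w ih =>
    intro z hz
    have hmem : compWord h w z ∈ ball (0:ℂ) 1 := compWord_mapsTo hr1 hmr w z hz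
    exact ((hhol i).differentiableAt (isOpen_ball.mem_nhds hmem)).comp_differentiableWithinAt z
      (ih z hz)

lemma compWord_deriv_bound (hr0 : 0 < r) (hr1 : r < 1)
    (hhol : ∀ i, DifferentiableOn ℂ (h i) (ball (0:ℂ) 1))
    (hmr : ∀ i, ∀ z ∈ ball (0:ℂ) 1, h i z ∈ ball (0:ℂ) r) :
    ∀ w : List (Fin 2), ∀ z ∈ ball (0:ℂ) 1,
      ‖deriv (compWord h w) z‖ * (1 - ‖z‖^2) ≤ r ^ w.length * (1 - ‖compWord h w z‖^2) := by
  intro w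
  induction w with
  | nil =>
    intro z hz
    simp [compWord]
  | cons i w ih =>
    intro z hz
    set G := compWord h w with hG
    have hGz : G z ∈ ball (0:ℂ) 1 := compWord_mapsTo hr1 hmr w z hz
    have dG : DifferentiableAt ℂ G z :=
      (compWord_diffOn hr1 hhol hmr w).differentiableAt (isOpen_ball.mem_nhds hz)
    have dh : DifferentiableAt ℂ (h i) (G z) :=
      (hhol i).differentiableAt (isOpen_ball.mem_nhds hGz)
    have hderiv : deriv (compWord h (i :: w)) z = deriv (h i) (G z) * deriv G z := by
      show deriv (h i ∘ G) z = _
      exact deriv_comp z dh dG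
    have A := schwarz_pick_r hr0 hr1 (hhol i) (hmr i) hGz
    have B := ih z hz
    have hposG : (0:ℝ) ≤ 1 - ‖G z‖^2 := by
      rw [mem_ball_zero_iff] at hGz; nlinarith [norm_nonneg (G z)]
    rw [hderiv, norm_mul]
    have hd1 : (0:ℝ) ≤ ‖deriv (h i) (G z)‖ := norm_nonneg _
    have hrn : (0:ℝ) ≤ r ^ w.length := pow_nonneg hr0.le _
    calc ‖deriv (h i) (G z)‖ * ‖deriv G z‖ * (1 - ‖z‖^2)
        = ‖deriv (h i) (G z)‖ * (‖deriv G z‖ * (1 - ‖z‖^2)) := by ring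
      _ ≤ ‖deriv (h i) (G z)‖ * (r ^ w.length * (1 - ‖G z‖^2)) :=
          mul_le_mul_of_nonneg_left B hd1
      _ = r ^ w.length * (‖deriv (h i) (G z)‖ * (1 - ‖G z‖^2)) := by ring
      _ ≤ r ^ w.length * (r * (1 - ‖h i (G z)‖^2)) := mul_le_mul_of_nonneg_left A hrn
      _ = r ^ (i :: w).length * (1 - ‖compWord h (i :: w) z‖^2) := by
          show _ = r ^ (w.length + 1) * _
          simp only [compWord, Function.comp_apply, hG]
          ring


lemma compWord_lip (hr0 : 0 < r) (hr1 : r < 1)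
    (hhol : ∀ i, DifferentiableOn ℂ (h i) (ball (0:ℂ) 1))
    (hmr : ∀ i, ∀ z ∈ ball (0:ℂ) 1, h i z ∈ ball (0:ℂ) r)
    (w : List (Fin 2)) {x y : ℂ} (hx : x ∈ ball (0:ℂ) r) (hy : y ∈ ball (0:ℂ) r) :
    ‖compWord h w y - compWord h w x‖ ≤ r ^ w.length / (1 - r^2) * ‖y - x‖ := by
  have hsub : ball (0:ℂ) r ⊆ ball (0:ℂ) 1 := ball_subset_ball hr1.le
  have hr2 : (0:ℝ) < 1 - r^2 := by nlinarith
  refine Convex.norm_image_sub_le_of_norm_deriv_le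
    (fun z hz => (compWord_diffOn hr1 hhol hmr w).differentiableAt
      (isOpen_ball.mem_nhds (hsub hz))) ?_ (convex_ball _ _) hx hy
  intro z hz
  have hz1 : z ∈ ball (0:ℂ) 1 := hsub hz
  have hb := compWord_deriv_bound hr0 hr1 hhol hmr w z hz1
  have hzr : ‖z‖ < r := mem_ball_zero_iff.mp hz
  have h1 : 1 - r^2 ≤ 1 - ‖z‖^2 := by nlinarith [norm_nonneg z]
  have h2 : 1 - ‖compWord h w z‖^2 ≤ 1 := by nlinarith [sq_nonneg (‖compWord h w z‖)]
  rw [le_div_iff₀ hr2]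
  have hd0 : (0:ℝ) ≤ ‖deriv (compWord h w) z‖ := norm_nonneg _
  have hrn : (0:ℝ) ≤ r ^ w.length := pow_nonneg hr0.le _
  calc ‖deriv (compWord h w) z‖ * (1 - r^2) ≤ ‖deriv (compWord h w) z‖ * (1 - ‖z‖^2) :=
        mul_le_mul_of_nonneg_left h1 hd0
    _ ≤ r ^ w.length * (1 - ‖compWord h w z‖^2) := hb
    _ ≤ r ^ w.length * 1 := mul_le_mul_of_nonneg_left h2 hrn
    _ = r ^ w.length := mul_one _

end Words

lemma compWord_append (h : Fin 2 → ℂ → ℂ) (w₁ w₂ : List (Fin 2)) :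
    compWord h (w₁ ++ w₂) = compWord h w₁ ∘ compWord h w₂ := by
  induction w₁ with
  | nil => rfl
  | cons i w ih =>
    show compWord h (i :: (w ++ w₂)) = (h i ∘ compWord h w) ∘ compWord h w₂
    rw [show compWord h (i :: (w ++ w₂)) = h i ∘ compWord h (w ++ w₂) from rfl, ih]
    rfl

lemma prefixComp_succ (h : Fin 2 → ℂ → ℂ) (I : ℕ → Fin 2) (n : ℕ) :
    prefixComp h I (n + 1) = prefixComp h I n ∘ h (I n) := by
  rw [prefixComp, prefixComp]
  have : (List.ofFn fun k : Fin (n+1) => I k)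
      = (List.ofFn fun k : Fin n => I k) ++ [I n] := by
    rw [List.ofFn_succ']
    simp [List.concat_eq_append]
  rw [this, compWord_append]
  rfl

/-- If `h₁, h₂ : D → D` are injective holomorphic self-maps of the unit disc
whose images have disjoint closures contained in `D`, then for every infinite sequence
`I ∈ {1,2}^ℕ` the nested intersection `⋂_{n≥1} h_{i₁}∘...∘h_{iₙ}(D)` is a single point. -/
theorem nested_intersection_is_singleton
    (h : Fin 2 → ℂ → ℂ)
    (hhol : ∀ i, DifferentiableOn ℂ (h i) (ball (0 : ℂ) 1))
    (hinj : ∀ i, Set.InjOn (h i) (ball (0 : ℂ) 1))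
    (hmaps : ∀ i, Set.MapsTo (h i) (ball (0 : ℂ) 1) (ball (0 : ℂ) 1))
    (hcl : ∀ i, closure (h i '' ball (0 : ℂ) 1) ⊆ ball (0 : ℂ) 1)
    (hdisj : closure (h 0 '' ball (0 : ℂ) 1) ∩ closure (h 1 '' ball (0 : ℂ) 1) = ∅) :
    ∀ I : ℕ → Fin 2,
      ∃! p : ℂ, p ∈ ⋂ (n : ℕ) (_ : 1 ≤ n), prefixComp h I n '' ball (0 : ℂ) 1 := by
  intro I
  -- a uniform radius r < 1 containing all images
  set K : Set ℂ := closure (h 0 '' ball (0:ℂ) 1) ∪ closure (h 1 '' ball (0:ℂ) 1) with hK_def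
  have hKsub : ∀ i : Fin 2, closure (h i '' ball (0:ℂ) 1) ⊆ K := by
    intro i
    fin_cases i
    · exact Set.subset_union_left
    · exact Set.subset_union_right
  have hK1 : K ⊆ ball (0:ℂ) 1 := Set.union_subset (hcl 0) (hcl 1)
  have hKbd : Bornology.IsBounded K := by
    refine (Metric.isBounded_ball (x := (0:ℂ)) (r := 1)).subset hK1
  have hKc : IsCompact K :=
    Metric.isCompact_of_isClosed_isBounded (isClosed_closure.union isClosed_closure) hKbd
  have hKne : K.Nonempty := by
    refine ⟨h 0 0, hKsub 0 (subset_closure ⟨0, by simp, rfl⟩)⟩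
  obtain ⟨x₀, hx₀K, hx₀max⟩ := hKc.exists_isMaxOn hKne (continuous_norm.continuousOn)
  set M := ‖x₀‖ with hM_def
  have hM1 : M < 1 := mem_ball_zero_iff.mp (hK1 hx₀K)
  have hM0 : 0 ≤ M := norm_nonneg _
  set r : ℝ := (M + 1) / 2 with hr_def
  have hr0 : 0 < r := by rw [hr_def]; linarith
  have hr1 : r < 1 := by rw [hr_def]; linarith
  have hMr : M < r := by rw [hr_def]; linarith
  have hKr : ∀ z ∈ K, z ∈ ball (0:ℂ) r := by
    intro z hz
    rw [mem_ball_zero_iff]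
    exact lt_of_le_of_lt (hx₀max hz) hMr
  have hmr : ∀ i, ∀ z ∈ ball (0:ℂ) 1, h i z ∈ ball (0:ℂ) r := by
    intro i z hz
    exact hKr _ (hKsub i (subset_closure ⟨z, hz, rfl⟩))
  -- the nested sets
  set S : ℕ → Set ℂ := fun n => prefixComp h I n '' ball (0:ℂ) 1 with hS_def
  have hSne : ∀ n, (S n).Nonempty := fun n => (nonempty_ball.mpr one_pos).image _
  have hSball : ∀ n, S n ⊆ ball (0:ℂ) 1 := by
    rintro n z ⟨x, hx, rfl⟩
    exact compWord_mapsTo hr1 hmr _ x hx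
  have hSsucc : ∀ n, S (n+1) = prefixComp h I n '' (h (I n) '' ball (0:ℂ) 1) := by
    intro n
    rw [hS_def]
    simp only [prefixComp_succ h I n, Set.image_comp]
  have hSsub : ∀ n, S (n+1) ⊆ S n := by
    intro n
    rw [hSsucc n]
    exact Set.image_mono ((hmaps (I n)).image_subset)
  have hclS : ∀ n, closure (S (n+1)) ⊆ S n := by
    intro n
    rw [hSsucc n]
    set A := h (I n) '' ball (0:ℂ) 1 with hA_def
    have hclA : closure A ⊆ ball (0:ℂ) 1 := hcl (I n)
    have hcomA : IsCompact (closure A) :=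
      Metric.isCompact_of_isClosed_isBounded isClosed_closure
        ((Metric.isBounded_ball (x := (0:ℂ)) (r := 1)).subset hclA)
    have hcont : ContinuousOn (prefixComp h I n) (closure A) :=
      ((compWord_diffOn hr1 hhol hmr _).continuousOn).mono hclA
    have himc : IsCompact (prefixComp h I n '' closure A) := hcomA.image_of_continuousOn hcont
    refine (closure_minimal (Set.image_mono subset_closure) himc.isClosed).trans ?_
    exact Set.image_mono hclA
  -- the intersection of closures is nonempty
  set T : ℕ → Set ℂ := fun n => closure (S (n+1)) with hT_def
  have hTne : ∀ n, (T n).Nonempty := fun n => (hSne (n+1)).closure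
  have hTsub : ∀ n, T (n+1) ⊆ T n := fun n => closure_mono (hSsub (n+1))
  have hTcl : ∀ n, IsClosed (T n) := fun n => isClosed_closure
  have hTc : IsCompact (T 0) :=
    Metric.isCompact_of_isClosed_isBounded isClosed_closure
      (((Metric.isBounded_ball (x := (0:ℂ)) (r := 1)).subset (hSball 1)).closure)
  obtain ⟨p, hp⟩ :=
    IsCompact.nonempty_iInter_of_sequence_nonempty_isCompact_isClosed T hTsub hTne hTc hTcl
  have hpT : ∀ n, p ∈ T n := fun n => Set.mem_iInter.mp hp n
  have hpS : ∀ n, p ∈ S n := fun n => hclS n (hpT n)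
  refine ⟨p, Set.mem_iInter₂.mpr fun n _ => hpS n, ?_⟩
  intro q hq
  have hqS : ∀ n, 1 ≤ n → q ∈ S n := fun n hn => Set.mem_iInter₂.mp hq n hn
  have hr2 : (0:ℝ) < 1 - r^2 := by nlinarith
  have key : ∀ m : ℕ, dist q p ≤ 2 * (r ^ m / (1 - r^2)) := by
    intro m
    have hpm : p ∈ S (m+1) := hpS (m+1)
    have hqm : q ∈ S (m+1) := hqS (m+1) (Nat.le_add_left 1 m)
    rw [hSsucc m] at hpm hqm
    obtain ⟨a, ha, hap⟩ := hpm
    obtain ⟨b, hb, hbq⟩ := hqm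
    have haR : a ∈ ball (0:ℂ) r := by
      obtain ⟨x, hx, rfl⟩ := ha; exact hmr _ x hx
    have hbR : b ∈ ball (0:ℂ) r := by
      obtain ⟨x, hx, rfl⟩ := hb; exact hmr _ x hx
    have hlip := compWord_lip hr0 hr1 hhol hmr (List.ofFn fun k : Fin m => I k) haR hbR
    rw [List.length_ofFn] at hlip
    have hba : ‖b - a‖ ≤ 2 := by
      have h1 : ‖b‖ < r := mem_ball_zero_iff.mp hbR
      have h2 : ‖a‖ < r := mem_ball_zero_iff.mp haR
      calc ‖b - a‖ ≤ ‖b‖ + ‖a‖ := norm_sub_le b a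
        _ ≤ 2 := by linarith
    have hCpos : (0:ℝ) ≤ r ^ m / (1 - r^2) := div_nonneg (pow_nonneg hr0.le m) hr2.le
    calc dist q p = ‖prefixComp h I m b - prefixComp h I m a‖ := by
          rw [dist_eq_norm, hap, hbq]
      _ ≤ r ^ m / (1 - r^2) * ‖b - a‖ := hlip
      _ ≤ r ^ m / (1 - r^2) * 2 := mul_le_mul_of_nonneg_left hba hCpos
      _ = 2 * (r ^ m / (1 - r^2)) := by ring
  have hten : Filter.Tendsto (fun m : ℕ => 2 * (r ^ m / (1 - r^2))) Filter.atTop (nhds 0) := by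
    have h1 := tendsto_pow_atTop_nhds_zero_of_lt_one hr0.le hr1
    have h2 := (h1.div_const (1 - r^2)).const_mul 2
    simpa using h2
  have hle : dist q p ≤ 0 := ge_of_tendsto hten (Filter.Eventually.of_forall key)
  exact dist_le_zero.mp hle
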